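/- Let ℓ ≥ 3 be an integer and let F be an ℓ-independent k-width-family of Fin m such that every G_i satisfies G_i ≠ ∅ and G_i ≠ Fin m. Fix b ∈ {0,1}^k and C ∈ {0,1}^{k×k}, and let v = v^ℓ_{F[b,C]} be the valuation associated with the collection F[b,C]. Then for all i, j ∈ [k]: (1) if b_i = 0 then v(G_i) = 1; (2) if b_i = 0 and C_{i,j} = 0 then v((G_i)ᶜ \ H^{(0)}_{i,j}) = ℓ − 1; (3) if b_i = 0 and C_{i,j} = 1 then v(H^{(0)}_{i,j}) = ℓ − 1; (4) if b_i = 1 and C_{i,j} = 0 then v(G_i \ H^{(1)}_{i,j}) = ℓ − 1; (5) if b_i = 1 and C_{i,j} = 1 then v(H^{(1)}_{i,j}) = ℓ − 1. -/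
import Mathlib


/-- A collection of bundles of `Fin m`, indexed by `ι`, is `ℓ`-sparse if the union of any
`ℓ - 1` (not necessarily distinct) members is not all of `Fin m`. -/
def Sparse (m ℓ : ℕ) {ι : Type*} (S : ι → Finset (Fin m)) : Prop :=
  ∀ g : Fin (ℓ - 1) → ι,
    (Finset.univ.sup fun t => S (g t)) ≠ (Finset.univ : Finset (Fin m))

/-- A `k`-width-family of `Fin m`. -/
structure WidthFamily (m k : ℕ) where
  G : Fin k → Finset (Fin m)
  H : Fin 2 → Fin k → Fin k → Finset (Fin m)
  H0_sub : ∀ i j, H 0 i j ⊆ (G i)ᶜ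
  H1_sub : ∀ i j, H 1 i j ⊆ G i

/-- The collection `F[b, C]` of `k²` bundles. -/
def WidthFamily.coll {m k : ℕ} (F : WidthFamily m k)
    (b : Fin k → Fin 2) (C : Fin k → Fin k → Fin 2) :
    Fin k × Fin k → Finset (Fin m) := fun p =>
  if b p.1 = 0 then
    if C p.1 p.2 = 0 then F.G p.1 ∪ F.H 0 p.1 p.2
    else F.G p.1 ∪ ((F.G p.1)ᶜ \ F.H 0 p.1 p.2)
  else
    if C p.1 p.2 = 0 then (F.G p.1)ᶜ ∪ F.H 1 p.1 p.2
    else (F.G p.1)ᶜ ∪ (F.G p.1 \ F.H 1 p.1 p.2)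

/-- `F` is `ℓ`-independent if `F[b, C]` is `ℓ`-sparse for every `b` and `C`. -/
def WidthFamily.Independent {m k : ℕ} (F : WidthFamily m k) (ℓ : ℕ) : Prop :=
  ∀ (b : Fin k → Fin 2) (C : Fin k → Fin k → Fin 2), Sparse m ℓ (F.coll b C)

/-- The cover number `σ_S(X)`: the least number of members of the collection `S` needed to
cover `X`, if `X` is contained in the union of all members, and `max ℓ d` otherwise (where
`d` is the number of members). -/
noncomputable def coverNum (m ℓ : ℕ) {ι : Type*} [Fintype ι]
    (S : ι → Finset (Fin m)) (X : Finset (Fin m)) : ℕ :=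
  if X ⊆ Finset.univ.sup S then
    sInf {n | ∃ Y : Finset ι, X ⊆ Y.sup S ∧ Y.card = n}
  else max ℓ (Fintype.card ι)

/-- The modified set-cover valuation `v_S^ℓ`. -/
noncomputable def vSl (m ℓ : ℕ) {ι : Type*} [Fintype ι]
    (S : ι → Finset (Fin m)) (X : Finset (Fin m)) : ℝ :=
  if (coverNum m ℓ S X : ℝ) < (ℓ : ℝ) / 2 then (coverNum m ℓ S X : ℝ)
  else if (coverNum m ℓ S Xᶜ : ℝ) < (ℓ : ℝ) / 2 then (ℓ : ℝ) - (coverNum m ℓ S Xᶜ : ℝ)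
  else (ℓ : ℝ) / 2

lemma coverNum_eq_one {m ℓ : ℕ} {ι : Type*} [Fintype ι] {S : ι → Finset (Fin m)}
    {X : Finset (Fin m)} (hX : X ≠ ∅) (p : ι) (h : X ⊆ S p) :
    coverNum m ℓ S X = 1 := by
  have hsub : X ⊆ Finset.univ.sup S := h.trans (Finset.le_sup (Finset.mem_univ p))
  rw [coverNum, if_pos hsub]
  have h1 : 1 ∈ {n | ∃ Y : Finset ι, X ⊆ Y.sup S ∧ Y.card = n} :=
    ⟨{p}, by simpa using h, by simp⟩
  refine le_antisymm (Nat.sInf_le h1) (Nat.one_le_iff_ne_zero.mpr ?_)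
  intro h0
  rcases Nat.sInf_eq_zero.mp h0 with h' | h'
  · obtain ⟨Y, hY, hcard⟩ := h'
    rw [Finset.card_eq_zero] at hcard
    subst hcard
    rw [Finset.sup_empty, Finset.bot_eq_empty] at hY
    exact hX (Finset.subset_empty.mp hY)
  · rw [h'] at h1; exact h1

lemma coverNum_ge {m ℓ : ℕ} {ι : Type*} [Fintype ι] {S : ι → Finset (Fin m)}
    (hS : Sparse m ℓ S) (hℓ : 3 ≤ ℓ)
    {X : Finset (Fin m)} (p : ι) (h : Xᶜ ⊆ S p) :
    ℓ - 1 ≤ coverNum m ℓ S X := by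
  rw [coverNum]
  split_ifs with hsub
  · refine le_csInf ⟨Fintype.card ι, Finset.univ, hsub, Finset.card_univ⟩ ?_
    rintro n ⟨Y, hY, rfl⟩
    by_contra hlt
    push_neg at hlt
    set e := Y.equivFin with he
    refine hS (fun t => if ht : (t : ℕ) < Y.card then (e.symm ⟨t, ht⟩ : ι) else p) ?_
    apply Finset.eq_univ_of_forall
    intro x
    rw [Finset.mem_sup]
    by_cases hx : x ∈ X
    · obtain ⟨q, hq, hxq⟩ := Finset.mem_sup.mp (hY hx)
      refine ⟨⟨(e ⟨q, hq⟩ : ℕ), lt_trans (e ⟨q, hq⟩).isLt hlt⟩, Finset.mem_univ _, ?_⟩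
      simp only [(e ⟨q, hq⟩).isLt, dif_pos, Fin.eta, Equiv.symm_apply_apply]
      exact hxq
    · refine ⟨⟨ℓ - 2, by omega⟩, Finset.mem_univ _, ?_⟩
      have : ¬ (ℓ - 2 < Y.card) := by omega
      simp only [this, dif_neg]
      exact h (Finset.mem_compl.mpr hx)
  · calc ℓ - 1 ≤ ℓ := Nat.sub_le _ _
      _ ≤ max ℓ (Fintype.card ι) := le_max_left _ _

lemma vSl_eq_sub_one {m ℓ : ℕ} {ι : Type*} [Fintype ι] {S : ι → Finset (Fin m)}
    (hS : Sparse m ℓ S) (hℓ : 3 ≤ ℓ) {X : Finset (Fin m)}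
    (hXc : Xᶜ ≠ ∅) (p : ι) (h : Xᶜ ⊆ S p) :
    vSl m ℓ S X = (ℓ : ℝ) - 1 := by
  have h1 := coverNum_eq_one (ℓ := ℓ) hXc p h
  have h2 := coverNum_ge hS hℓ p h
  have hℓR : (3 : ℝ) ≤ (ℓ : ℝ) := by exact_mod_cast hℓ
  have h2R : (ℓ : ℝ) - 1 ≤ (coverNum m ℓ S X : ℝ) := by
    have := (Nat.cast_le (α := ℝ)).mpr h2
    rwa [Nat.cast_sub (by omega), Nat.cast_one] at this
  rw [vSl, if_neg (by linarith), h1, if_pos (by push_cast; linarith)]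
  norm_num

/-- Properties of the valuation `v = v^ℓ_{F[b,C]}` associated with an `ℓ`-independent
`k`-width-family `F` (with `ℓ ≥ 3` and every `G i` proper and nonempty). -/
theorem vSl_coll_properties
    (m k ℓ : ℕ) (hm : 0 < m) (hℓ : 3 ≤ ℓ)
    (F : WidthFamily m k) (hF : F.Independent ℓ)
    (hG : ∀ i : Fin k, F.G i ≠ ∅ ∧ F.G i ≠ (Finset.univ : Finset (Fin m)))
    (b : Fin k → Fin 2) (C : Fin k → Fin k → Fin 2)
    (v : Finset (Fin m) → ℝ) (hv : v = vSl m ℓ (F.coll b C)) :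
    ∀ i j : Fin k,
      (b i = 0 → v (F.G i) = 1) ∧
      (b i = 0 → C i j = 0 → v ((F.G i)ᶜ \ F.H 0 i j) = (ℓ : ℝ) - 1) ∧
      (b i = 0 → C i j = 1 → v (F.H 0 i j) = (ℓ : ℝ) - 1) ∧
      (b i = 1 → C i j = 0 → v (F.G i \ F.H 1 i j) = (ℓ : ℝ) - 1) ∧
      (b i = 1 → C i j = 1 → v (F.H 1 i j) = (ℓ : ℝ) - 1) := by
  subst hv
  intro i j
  have hsp := hF b C
  refine ⟨?_, ?_, ?_, ?_, ?_⟩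
  · intro hb
    have hGsub : F.G i ⊆ F.coll b C (i, j) := by
      simp only [WidthFamily.coll]
      rw [if_pos hb]
      split_ifs <;> exact Finset.subset_union_left
    have h1 := coverNum_eq_one (ℓ := ℓ) (hG i).1 (i, j) hGsub
    have hℓR : (3 : ℝ) ≤ (ℓ : ℝ) := by exact_mod_cast hℓ
    rw [vSl, h1, if_pos (by push_cast; linarith)]
    norm_num
  · intro hb hc
    refine vSl_eq_sub_one hsp hℓ ?_ (i, j) ?_
    · intro hemp
      have hGs : F.G i ⊆ ((F.G i)ᶜ \ F.H 0 i j)ᶜ := by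
        intro x hx
        simp only [Finset.mem_compl, Finset.mem_sdiff, not_and, not_not]
        tauto
      exact (hG i).1 (Finset.subset_empty.mp (hemp ▸ hGs))
    · simp only [WidthFamily.coll]
      rw [if_pos hb, if_pos hc]
      intro x hx
      simp only [Finset.mem_compl, Finset.mem_sdiff, not_and, not_not,
        Finset.mem_union] at hx ⊢
      tauto
  · intro hb hc
    refine vSl_eq_sub_one hsp hℓ ?_ (i, j) ?_
    · intro hemp
      have hGs : F.G i ⊆ (F.H 0 i j)ᶜ := fun x hx => by
        simp only [Finset.mem_compl]
        intro hxH
        exact Finset.mem_compl.mp (F.H0_sub i j hxH) hx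
      exact (hG i).1 (Finset.subset_empty.mp (hemp ▸ hGs))
    · have hc' : ¬ (C i j = 0) := by rw [hc]; decide
      simp only [WidthFamily.coll]
      rw [if_pos hb, if_neg hc']
      intro x hx
      simp only [Finset.mem_compl, Finset.mem_union, Finset.mem_sdiff] at hx ⊢
      tauto
  · intro hb hc
    have hb' : ¬ (b i = 0) := by rw [hb]; decide
    refine vSl_eq_sub_one hsp hℓ ?_ (i, j) ?_
    · intro hemp
      have hGs : (F.G i)ᶜ ⊆ (F.G i \ F.H 1 i j)ᶜ := by
        intro x hx
        simp only [Finset.mem_compl] at hx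
        simp only [Finset.mem_compl, Finset.mem_sdiff, not_and, not_not]
        tauto
      have : (F.G i)ᶜ = ∅ := Finset.subset_empty.mp (hemp ▸ hGs)
      exact (hG i).2 (by simpa [Finset.compl_eq_empty_iff] using this)
    · simp only [WidthFamily.coll]
      rw [if_neg hb', if_pos hc]
      intro x hx
      simp only [Finset.mem_compl, Finset.mem_sdiff, not_and, not_not,
        Finset.mem_union] at hx ⊢
      tauto
  · intro hb hc
    have hb' : ¬ (b i = 0) := by rw [hb]; decide
    have hc' : ¬ (C i j = 0) := by rw [hc]; decide
    refine vSl_eq_sub_one hsp hℓ ?_ (i, j) ?_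
    · intro hemp
      have hGs : (F.G i)ᶜ ⊆ (F.H 1 i j)ᶜ := by
        intro x hx
        simp only [Finset.mem_compl] at hx ⊢
        intro hxH
        exact hx (F.H1_sub i j hxH)
      have : (F.G i)ᶜ = ∅ := Finset.subset_empty.mp (hemp ▸ hGs)
      exact (hG i).2 (by simpa [Finset.compl_eq_empty_iff] using this)
    · simp only [WidthFamily.coll]
      rw [if_neg hb', if_neg hc']
      intro x hx
      simp only [Finset.mem_compl, Finset.mem_union, Finset.mem_sdiff] at hx ⊢
      tauto
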